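/- There exists a 6-dimensional real graded nilpotent Lie algebra g¹ with basis e₁, …, e₅, e₇ and nonzero brackets exactly [e₁,e₃] = e₄, [e₂,e₃] = e₅, [e₂,e₅] = e₇, [e₃,e₄] = e₇ (and those forced by antisymmetry); i.e., these structure constants satisfy the Jacobi identity. -/

import Mathlib

/-- Wrapper type for `Fin 6 → ℝ` carrying the `m6_3_4` Lie algebra structure. -/
structure G634 where
  c : Fin 6 → ℝ

namespace G634

@[ext] lemma ext' {x y : G634} (h : x.c = y.c) : x = y := by cases x; cases y; simpa using h

instance : Add G634 := ⟨fun x y => ⟨x.c + y.c⟩⟩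
instance : Zero G634 := ⟨⟨0⟩⟩
instance : Neg G634 := ⟨fun x => ⟨-x.c⟩⟩
instance : SMul ℝ G634 := ⟨fun r x => ⟨r • x.c⟩⟩

@[simp] lemma add_c (x y : G634) : (x + y).c = x.c + y.c := rfl
@[simp] lemma zero_c : (0 : G634).c = 0 := rfl
@[simp] lemma neg_c (x : G634) : (-x).c = -x.c := rfl
@[simp] lemma smul_c (r : ℝ) (x : G634) : (r • x).c = r • x.c := rfl

instance : AddCommGroup G634 where
  add_assoc a b c := by ext i; simp [add_assoc]
  zero_add a := by ext i; simp
  add_zero a := by ext i; simp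
  add_comm a b := by ext i; simp [add_comm]
  neg_add_cancel a := by ext i; simp
  nsmul := nsmulRec
  zsmul := zsmulRec

instance : Module ℝ G634 where
  one_smul x := by ext i; simp
  mul_smul r s x := by ext i; simp [mul_smul, mul_assoc]
  smul_zero r := by ext i; simp
  smul_add r x y := by ext i; simp [mul_add]
  add_smul r s x := by ext i; simp [add_mul]
  zero_smul x := by ext i; simp

instance : Bracket G634 G634 :=
  ⟨fun x y => ⟨![0, 0, 0,
      x.c 0 * y.c 2 - x.c 2 * y.c 0,
      x.c 1 * y.c 2 - x.c 2 * y.c 1,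
      x.c 1 * y.c 4 - x.c 4 * y.c 1 + x.c 2 * y.c 3 - x.c 3 * y.c 2]⟩⟩

@[simp] lemma lie_c (x y : G634) :
    (⁅x, y⁆ : G634).c = ![0, 0, 0,
      x.c 0 * y.c 2 - x.c 2 * y.c 0,
      x.c 1 * y.c 2 - x.c 2 * y.c 1,
      x.c 1 * y.c 4 - x.c 4 * y.c 1 + x.c 2 * y.c 3 - x.c 3 * y.c 2] := rfl

instance : LieRing G634 where
  add_lie x y z := by ext i; fin_cases i <;> simp [show (5:Fin 6) = Fin.succ 4 from rfl, Matrix.cons_val_succ] <;> ring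
  lie_add x y z := by ext i; fin_cases i <;> simp [show (5:Fin 6) = Fin.succ 4 from rfl, Matrix.cons_val_succ] <;> ring
  lie_self x := by ext i; fin_cases i <;> simp [show (5:Fin 6) = Fin.succ 4 from rfl, Matrix.cons_val_succ] <;> ring
  leibniz_lie x y z := by ext i; fin_cases i <;> simp [show (5:Fin 6) = Fin.succ 4 from rfl, Matrix.cons_val_succ] <;> ring

instance : LieAlgebra ℝ G634 where
  lie_smul r x y := by ext i; fin_cases i <;> simp [show (5:Fin 6) = Fin.succ 4 from rfl, Matrix.cons_val_succ] <;> ring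

/-- The coordinate linear equivalence with `Fin 6 → ℝ`. -/
noncomputable def cL : G634 ≃ₗ[ℝ] (Fin 6 → ℝ) where
  toFun := c
  invFun := G634.mk
  map_add' _ _ := rfl
  map_smul' _ _ := rfl
  left_inv _ := rfl
  right_inv _ := rfl

instance : IsNoetherian ℝ G634 := isNoetherian_of_linearEquiv cL.symm

/-- The standard basis. -/
noncomputable def b : Module.Basis (Fin 6) ℝ G634 := (Pi.basisFun ℝ (Fin 6)).map cL.symm

lemma b_apply (i : Fin 6) : b i = ⟨Pi.single i 1⟩ := by
  simp [b, cL]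

end G634

open G634 in
/-- Existence of the 6-dimensional real nilpotent Lie algebra `g¹` (m6_3_4) with basis
`e₁,…,e₅,e₇` (here `e 0,…,e 4, e 5`) whose only nonzero brackets are
`⁅e₁,e₃⁆ = e₄`, `⁅e₂,e₃⁆ = e₅`, `⁅e₂,e₅⁆ = e₇`, `⁅e₃,e₄⁆ = e₇`; i.e. these
structure constants satisfy the Jacobi identity. -/
theorem stmt_5 :
    ∃ (L : Type) (_ : LieRing L) (_ : LieAlgebra ℝ L) (e : Fin 6 → L),
      LinearIndependent ℝ e ∧ Submodule.span ℝ (Set.range e) = ⊤ ∧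
      LieRing.IsNilpotent L ∧
      ⁅e 0, e 2⁆ = e 3 ∧ ⁅e 1, e 2⁆ = e 4 ∧ ⁅e 1, e 4⁆ = e 5 ∧ ⁅e 2, e 3⁆ = e 5 ∧
      ⁅e 0, e 1⁆ = 0 ∧ ⁅e 0, e 3⁆ = 0 ∧ ⁅e 0, e 4⁆ = 0 ∧ ⁅e 0, e 5⁆ = 0 ∧
      ⁅e 1, e 3⁆ = 0 ∧ ⁅e 1, e 5⁆ = 0 ∧ ⁅e 2, e 4⁆ = 0 ∧
      ⁅e 2, e 5⁆ = 0 ∧ ⁅e 3, e 4⁆ = 0 ∧ ⁅e 3, e 5⁆ = 0 ∧ ⁅e 4, e 5⁆ = 0 := by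
  refine ⟨G634, inferInstance, inferInstance, b, b.linearIndependent, b.span_eq, ?_, ?_⟩
  · rw [LieAlgebra.isNilpotent_iff_forall (R := ℝ)]
    intro x
    refine ⟨3, ?_⟩
    ext y i
    have h3 : ((LieAlgebra.ad ℝ G634 x ^ 3) y) = ⁅x, ⁅x, ⁅x, y⁆⁆⁆ := rfl
    rw [h3]
    fin_cases i <;> simp [show (5:Fin 6) = Fin.succ 4 from rfl, Matrix.cons_val_succ] <;> ring
  · simp only [b_apply]
    refine ⟨?_, ?_, ?_, ?_, ?_, ?_, ?_, ?_, ?_, ?_, ?_, ?_, ?_, ?_, ?_⟩ <;>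
      · ext i; fin_cases i <;> simp [Pi.single_apply] <;> rfl
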